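/- Let G be a compact topological group with Haar probability measure ν, E a nontrivial real Banach space, and λ : G → L(E,E) a continuous nearly multiplicative pseudo-representation, i.e. λ is unital and c(λ) ≤ (1/9)·b(λ)^{−2}. Then every λ(g) is invertible, the multiplicative average λ̄ is defined, and λ̄ is itself nearly multiplicative: λ̄ is unital and c(λ̄) ≤ (1/9)·b(λ̄)^{−2}. -/

import Mathlib

open MeasureTheory

/-- The multiplicative average of a pseudo-representation `λ` of a compact group `G`
on a Banach space `E`, relative to a (Haar probability) measure `ν`:
`λ̄(g) := ∫ λ(gk) ∘ λ(k)⁻¹ dν(k)` (Bochner integral). -/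
noncomputable def mulAvg {G : Type*} [Group G] [TopologicalSpace G]
    [MeasurableSpace G] {E : Type*} [NormedAddCommGroup E] [NormedSpace ℝ E]
    (ν : Measure G) (lam : G → E →L[ℝ] E) : G → E →L[ℝ] E :=
  fun g => ∫ k, (lam (g * k)).comp (lam k).inverse ∂ν

/-- `b(λ) := sup_{g} ‖λ(g)‖`. -/
noncomputable def bSup {G : Type*} [Group G] {E : Type*} [NormedAddCommGroup E]
    [NormedSpace ℝ E] (lam : G → E →L[ℝ] E) : ℝ :=
  ⨆ g : G, ‖lam g‖

/-- `c(λ) := sup_{g',g} ‖λ(g'g) − λ(g')∘λ(g)‖`, the multiplicativity defect. -/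
noncomputable def cSup {G : Type*} [Group G] {E : Type*} [NormedAddCommGroup E]
    [NormedSpace ℝ E] (lam : G → E →L[ℝ] E) : ℝ :=
  ⨆ p : G × G, ‖lam (p.1 * p.2) - (lam p.1).comp (lam p.2)‖

private lemma isUnit_of_mul_isUnit_of_mul_isUnit {A : Type*} [Ring A] {a b : A}
    (h1 : IsUnit (a * b)) (h2 : IsUnit (b * a)) : IsUnit a := by
  obtain ⟨u, hu⟩ := h1
  obtain ⟨v, hv⟩ := h2
  have hr : a * (b * ↑u⁻¹) = 1 := by rw [← mul_assoc, ← hu, Units.mul_inv]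
  have hl : (↑v⁻¹ * b) * a = 1 := by rw [mul_assoc, ← hv, Units.inv_mul]
  have hrl : (↑v⁻¹ * b : A) = b * ↑u⁻¹ := by
    calc (↑v⁻¹ * b : A) = (↑v⁻¹ * b) * (a * (b * ↑u⁻¹)) := by rw [hr, mul_one]
    _ = ((↑v⁻¹ * b) * a) * (b * ↑u⁻¹) := by noncomm_ring
    _ = b * ↑u⁻¹ := by rw [hl, one_mul]
  exact ⟨⟨a, b * ↑u⁻¹, hr, hrl ▸ hl⟩, rfl⟩

private lemma near_one_unit {A : Type*} [NormedRing A] [NormOneClass A]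
    [HasSummableGeomSeries A] {x : A} (h : ‖1 - x‖ < 1) :
    IsUnit x ∧ ‖Ring.inverse x‖ ≤ (1 - ‖1 - x‖)⁻¹ := by
  have hu : IsUnit x := by
    have := isUnit_one_sub_of_norm_lt_one h
    rwa [sub_sub_cancel] at this
  refine ⟨hu, ?_⟩
  have h2 : Ring.inverse x = ∑' i : ℕ, (1 - x) ^ i := by
    conv_lhs => rw [← sub_sub_cancel 1 x, ← geom_series_eq_inverse _ h]
  rw [h2]
  have := tsum_geometric_le_of_norm_lt_one (1 - x) h
  simpa [norm_one] using this

private lemma cont_integrable {α β : Type*} [TopologicalSpace α] [MeasurableSpace α]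
    [OpensMeasurableSpace α] [CompactSpace α] [NormedAddCommGroup β]
    {f : α → β} (hf : Continuous f) (μ : Measure α) [IsFiniteMeasure μ] :
    Integrable f μ := by
  have hsm : StronglyMeasurable f := by
    borelize β
    rw [stronglyMeasurable_iff_measurable_separable]
    exact ⟨hf.measurable, (isCompact_range hf).isSeparable⟩
  obtain ⟨C, hC⟩ := (isCompact_range hf.norm).bddAbove
  exact ⟨hsm.aestronglyMeasurable,
    HasFiniteIntegral.of_bounded (ae_of_all _ fun x => hC ⟨x, rfl⟩)⟩

set_option maxHeartbeats 2000000 in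
set_option synthInstance.maxHeartbeats 1000000 in
/-- The multiplicative average of a nearly multiplicative pseudo-representation is
again nearly multiplicative (one-object case of the paper's claim following
Definition 6). -/
theorem mulAvg_nearly_multiplicative
    {G : Type*} [Group G] [TopologicalSpace G] [IsTopologicalGroup G]
    [CompactSpace G] [MeasurableSpace G] [BorelSpace G]
    (ν : Measure G) [ν.IsHaarMeasure] [IsProbabilityMeasure ν]
    {E : Type*} [NormedAddCommGroup E] [NormedSpace ℝ E] [CompleteSpace E]
    [Nontrivial E]
    (lam : G → E →L[ℝ] E) (hcont : Continuous lam)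
    (hunital : lam 1 = ContinuousLinearMap.id ℝ E)
    (hnear : cSup lam ≤ (1 / 9) * (bSup lam ^ 2)⁻¹) :
    (∀ g : G, ∃ u : E ≃L[ℝ] E, lam g = u) ∧
    mulAvg ν lam 1 = ContinuousLinearMap.id ℝ E ∧
    cSup (mulAvg ν lam) ≤ (1 / 9) * (bSup (mulAvg ν lam) ^ 2)⁻¹ := by
  classical
  set b := bSup lam with hbdef
  set c := cSup lam with hcdef
  have hband : BddAbove (Set.range fun g => ‖lam g‖) := (isCompact_range hcont.norm).bddAbove
  have hble : ∀ g, ‖lam g‖ ≤ b := fun g => le_ciSup hband g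
  have hb1 : (1:ℝ) ≤ b := by
    have h := hble 1
    rwa [hunital, ContinuousLinearMap.norm_id] at h
  have hbpos : (0:ℝ) < b := lt_of_lt_of_le one_pos hb1
  have hcle : ∀ g' g, ‖lam (g' * g) - lam g' * lam g‖ ≤ c := by
    intro g' g
    have hcand : BddAbove (Set.range fun p : G × G =>
        ‖lam (p.1 * p.2) - (lam p.1).comp (lam p.2)‖) := by
      refine ⟨b + b * b, ?_⟩
      rintro x ⟨p, rfl⟩
      have h1 : ‖(lam p.1).comp (lam p.2)‖ ≤ b * b :=
        le_trans (ContinuousLinearMap.opNorm_comp_le _ _)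
          (mul_le_mul (hble _) (hble _) (norm_nonneg _) hbpos.le)
      calc ‖lam (p.1 * p.2) - (lam p.1).comp (lam p.2)‖
          ≤ ‖lam (p.1 * p.2)‖ + ‖(lam p.1).comp (lam p.2)‖ := norm_sub_le _ _
        _ ≤ b + b * b := add_le_add (hble _) h1
    rw [ContinuousLinearMap.mul_def, hcdef, cSup]; exact le_ciSup hcand (g', g)
  have hc0 : (0:ℝ) ≤ c := le_trans (norm_nonneg _) (hcle 1 1)
  have hcb2 : c * b ^ 2 ≤ 1 / 9 := by
    have h2 : (0:ℝ) < b ^ 2 := by positivity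
    calc c * b ^ 2 ≤ (1/9) * (b^2)⁻¹ * b^2 :=
          mul_le_mul_of_nonneg_right hnear (le_of_lt h2)
      _ = 1/9 := by
          rw [mul_assoc, inv_mul_cancel₀ h2.ne', mul_one]
  have hb2ge1 : (1:ℝ) ≤ b ^ 2 := by nlinarith
  have hc9 : c ≤ 1 / 9 := by nlinarith [mul_le_mul_of_nonneg_left hb2ge1 hc0]
  have hnear1 : ∀ g g' : G, g * g' = 1 → ‖1 - lam g * lam g'‖ ≤ c := by
    intro g g' hgg'
    have h1 : lam (g * g') = 1 := by
      rw [hgg', hunital, ContinuousLinearMap.one_def]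
    rw [← h1]
    exact hcle g g'
  have hIu : ∀ g, IsUnit (lam g) := by
    intro g
    have h1 : ‖1 - lam g * lam g⁻¹‖ < 1 :=
      lt_of_le_of_lt (hnear1 g g⁻¹ (mul_inv_cancel g)) (by linarith)
    have h2 : ‖1 - lam g⁻¹ * lam g‖ < 1 :=
      lt_of_le_of_lt (hnear1 g⁻¹ g (inv_mul_cancel g)) (by linarith)
    exact isUnit_of_mul_isUnit_of_mul_isUnit (near_one_unit h1).1 (near_one_unit h2).1
  have hinveq : ∀ f : E →L[ℝ] E, f.inverse = Ring.inverse f :=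
    fun f => (congrFun ContinuousLinearMap.ringInverse_eq_inverse f).symm
  have hmulinv : ∀ g, lam g * (lam g).inverse = 1 := by
    intro g; rw [hinveq]; exact Ring.mul_inverse_cancel _ (hIu g)
  have hinvmul : ∀ g, (lam g).inverse * lam g = 1 := by
    intro g; rw [hinveq]; exact Ring.inverse_mul_cancel _ (hIu g)
  have hinvb : ∀ g, ‖(lam g).inverse‖ ≤ 9/8 * b := by
    intro g
    have h1 : ‖1 - lam g * lam g⁻¹‖ ≤ c := hnear1 g g⁻¹ (mul_inv_cancel g)
    have h1' : ‖1 - lam g * lam g⁻¹‖ < 1 := lt_of_le_of_lt h1 (by linarith)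
    obtain ⟨hwu, hwn⟩ := near_one_unit h1'
    have hwn' : ‖Ring.inverse (lam g * lam g⁻¹)‖ ≤ 9/8 := by
      refine le_trans hwn ?_
      have h89 : (8:ℝ)/9 ≤ 1 - ‖1 - lam g * lam g⁻¹‖ := by linarith
      calc (1 - ‖1 - lam g * lam g⁻¹‖)⁻¹ ≤ ((8:ℝ)/9)⁻¹ :=
            inv_anti₀ (by norm_num) h89
        _ = 9/8 := by norm_num
    have key : Ring.inverse (lam g) = lam g⁻¹ * Ring.inverse (lam g * lam g⁻¹) := by
      have h2 : lam g * (lam g⁻¹ * Ring.inverse (lam g * lam g⁻¹)) = 1 := by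
        rw [← mul_assoc]; exact Ring.mul_inverse_cancel _ hwu
      calc Ring.inverse (lam g)
          = Ring.inverse (lam g) * (lam g * (lam g⁻¹ * Ring.inverse (lam g * lam g⁻¹))) := by
            rw [h2, mul_one]
        _ = (Ring.inverse (lam g) * lam g) * (lam g⁻¹ * Ring.inverse (lam g * lam g⁻¹)) := by
            rw [mul_assoc]
        _ = lam g⁻¹ * Ring.inverse (lam g * lam g⁻¹) := by
            rw [Ring.inverse_mul_cancel _ (hIu g), one_mul]
    rw [hinveq, key]
    calc ‖lam g⁻¹ * Ring.inverse (lam g * lam g⁻¹)‖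
        ≤ ‖lam g⁻¹‖ * ‖Ring.inverse (lam g * lam g⁻¹)‖ := norm_mul_le _ _
      _ ≤ b * (9/8) := mul_le_mul (hble _) hwn' (norm_nonneg _) (le_of_lt hbpos)
      _ = 9/8 * b := mul_comm _ _
  have hinvcont : Continuous fun k => (lam k).inverse := by
    have h : (fun k => (lam k).inverse) = fun k => Ring.inverse (lam k) := by
      funext k; exact hinveq (lam k)
    rw [h, continuous_iff_continuousAt]
    intro k
    have hca := NormedRing.inverse_continuousAt (hIu k).unit
    rw [(hIu k).unit_spec] at hca
    exact hca.comp hcont.continuousAt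
  have hintegrand_cont : ∀ g : G, Continuous fun k => lam (g * k) * (lam k).inverse :=
    fun g => (hcont.comp (continuous_mul_left g)).mul hinvcont
  have hInt : ∀ g : G, Integrable (fun k => lam (g * k) * (lam k).inverse) ν :=
    fun g => cont_integrable (hintegrand_cont g) ν
  set bar := mulAvg ν lam with hbar
  have hbar_def : ∀ g, bar g = ∫ k, lam (g * k) * (lam k).inverse ∂ν := fun g => rfl
  have hbar1 : bar 1 = ContinuousLinearMap.id ℝ E := by
    have h1 : ∀ k : G, lam (1 * k) * (lam k).inverse = 1 := by
      intro k; rw [one_mul]; exact hmulinv k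
    rw [hbar_def]
    simp only [h1]
    rw [integral_const, probReal_univ, one_smul,
      ContinuousLinearMap.one_def]
  have hP1 : ∀ g k : G, ‖lam (g * k) * (lam k).inverse - lam g‖ ≤ c * (9/8 * b) := by
    intro g k
    have hre : lam (g * k) * (lam k).inverse - lam g
        = (lam (g * k) - lam g * lam k) * (lam k).inverse := by
      rw [sub_mul, mul_assoc, hmulinv k, mul_one]
    rw [hre]
    calc ‖(lam (g * k) - lam g * lam k) * (lam k).inverse‖
        ≤ ‖lam (g * k) - lam g * lam k‖ * ‖(lam k).inverse‖ := norm_mul_le _ _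
      _ ≤ c * (9/8 * b) := mul_le_mul (hcle g k) (hinvb k) (norm_nonneg _) hc0
  have hbarsub : ∀ g, ‖bar g - lam g‖ ≤ c * (9/8 * b) := by
    intro g
    have heq : bar g - lam g = ∫ k, (lam (g * k) * (lam k).inverse - lam g) ∂ν := by
      rw [integral_sub (hInt g) (integrable_const _), integral_const, probReal_univ, one_smul, hbar_def]
    rw [heq]
    have h := norm_integral_le_of_norm_le_const (μ := ν) (ae_of_all _ fun k => hP1 g k)
    simpa using h
  have hbarle : ∀ g, ‖bar g‖ ≤ b + c * (9/8 * b) := by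
    intro g
    calc ‖bar g‖ = ‖(bar g - lam g) + lam g‖ := by rw [sub_add_cancel]
      _ ≤ ‖bar g - lam g‖ + ‖lam g‖ := norm_add_le _ _
      _ ≤ c * (9/8 * b) + b := add_le_add (hbarsub g) (hble g)
      _ = b + c * (9/8 * b) := add_comm _ _
  have hbarBdd : BddAbove (Set.range fun g => ‖bar g‖) :=
    ⟨b + c * (9/8 * b), by rintro x ⟨g, rfl⟩; exact hbarle g⟩
  have hbarb_le : bSup bar ≤ 9/8 * b := by
    refine ciSup_le fun g => le_trans (hbarle g) ?_
    nlinarith [hc9, hbpos]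
  have hbarb1 : (1:ℝ) ≤ bSup bar := by
    have h := le_ciSup hbarBdd (1 : G)
    rwa [hbar1, ContinuousLinearMap.norm_id] at h
  have hmul_right : ∀ (F : G → E →L[ℝ] E), Integrable F ν → ∀ Q : E →L[ℝ] E,
      ∫ k, F k * Q ∂ν = (∫ k, F k ∂ν) * Q := by
    intro F hF Q
    have h := ((ContinuousLinearMap.mul ℝ (E →L[ℝ] E)).flip Q).integral_comp_comm hF
    simpa using h
  have hmul_left : ∀ (F : G → E →L[ℝ] E), Integrable F ν → ∀ P : E →L[ℝ] E,
      ∫ k, P * F k ∂ν = P * ∫ k, F k ∂ν := by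
    intro F hF P
    have h := ((ContinuousLinearMap.mul ℝ (E →L[ℝ] E)) P).integral_comp_comm hF
    simpa using h
  have hkey : ∀ g' g : G, ‖bar (g' * g) - bar g' * bar g‖
      ≤ 2 * (c * (9/8 * b)) * (c * (9/8 * b)) := by
    intro g' g
    set Q := lam g with hQ
    set P := bar g' with hP
    set A : G → E →L[ℝ] E := fun k => lam (g' * (g * k)) * (lam (g * k)).inverse with hA
    set B : G → E →L[ℝ] E := fun k => lam (g * k) * (lam k).inverse with hB
    have hAcont : Continuous A := by
      rw [hA]
      exact ((hcont.comp ((continuous_mul_left g').comp (continuous_mul_left g))).mul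
        (hinvcont.comp (continuous_mul_left g)))
    have hAint : Integrable A ν := cont_integrable hAcont ν
    have hBint : Integrable B ν := hInt g
    have hintA : ∫ k, A k ∂ν = P := by
      rw [hP, hbar_def, hA]
      exact integral_mul_left_eq_self (fun k => lam (g' * k) * (lam k).inverse) g
    have hintB : ∫ k, B k ∂ν = bar g := (hbar_def g).symm
    have hAB : ∀ k, A k * B k = lam ((g' * g) * k) * (lam k).inverse := by
      intro k
      calc A k * B k
          = lam (g' * (g * k)) * (((lam (g * k)).inverse * lam (g * k)) * (lam k).inverse) := by
            rw [hA, hB]; simp only [mul_assoc]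
        _ = lam ((g' * g) * k) * (lam k).inverse := by
            rw [hinvmul, one_mul, mul_assoc g' g k]
    have hexp : ∀ k, (A k - P) * (B k - Q)
        = (lam ((g' * g) * k) * (lam k).inverse - A k * Q) - (P * B k - P * Q) := by
      intro k
      rw [← hAB k]
      noncomm_ring
    have hi1 : Integrable (fun k => lam ((g' * g) * k) * (lam k).inverse) ν := hInt (g' * g)
    have hi2 : Integrable (fun k => A k * Q) ν :=
      cont_integrable (hAcont.mul continuous_const) ν
    have hi3 : Integrable (fun k => P * B k) ν :=
      cont_integrable (continuous_const.mul (hintegrand_cont g)) ν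
    have hi4 : Integrable (fun _ : G => P * Q) ν := integrable_const _
    have heq2 : ∫ k, (A k - P) * (B k - Q) ∂ν = bar (g' * g) - P * bar g := by
      calc ∫ k, (A k - P) * (B k - Q) ∂ν
          = ∫ k, ((lam ((g' * g) * k) * (lam k).inverse - A k * Q)
              - (P * B k - P * Q)) ∂ν := by
            simp only [hexp]
        _ = (∫ k, (lam ((g' * g) * k) * (lam k).inverse - A k * Q) ∂ν)
              - ∫ k, (P * B k - P * Q) ∂ν := integral_sub (hi1.sub hi2) (hi3.sub hi4)
        _ = ((∫ k, lam ((g' * g) * k) * (lam k).inverse ∂ν) - ∫ k, A k * Q ∂ν)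
              - ((∫ k, P * B k ∂ν) - ∫ k, P * Q ∂ν) := by
            rw [integral_sub hi1 hi2, integral_sub hi3 hi4]
        _ = (bar (g' * g) - P * Q) - (P * bar g - P * Q) := by
            rw [hmul_right A hAint Q, hintA, hmul_left B hBint P, hintB,
              integral_const, probReal_univ, one_smul, ← hbar_def]
        _ = bar (g' * g) - P * bar g := by abel
    have hnb : ∀ k, ‖(A k - P) * (B k - Q)‖ ≤ 2 * (c * (9/8 * b)) * (c * (9/8 * b)) := by
      intro k
      have hBk : ‖B k - Q‖ ≤ c * (9/8 * b) := by rw [hB, hQ]; exact hP1 g k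
      have hAk : ‖A k - P‖ ≤ 2 * (c * (9/8 * b)) := by
        calc ‖A k - P‖ = ‖(A k - lam g') + (lam g' - P)‖ := by rw [sub_add_sub_cancel]
          _ ≤ ‖A k - lam g'‖ + ‖lam g' - P‖ := norm_add_le _ _
          _ ≤ c * (9/8 * b) + c * (9/8 * b) := by
              refine add_le_add ?_ ?_
              · rw [hA]; exact hP1 g' (g * k)
              · rw [norm_sub_rev, hP]; exact hbarsub g'
          _ = 2 * (c * (9/8 * b)) := by ring
      calc ‖(A k - P) * (B k - Q)‖ ≤ ‖A k - P‖ * ‖B k - Q‖ := norm_mul_le _ _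
        _ ≤ 2 * (c * (9/8 * b)) * (c * (9/8 * b)) :=
            mul_le_mul hAk hBk (norm_nonneg _) (by positivity)
    rw [← heq2]
    have h := norm_integral_le_of_norm_le_const (μ := ν) (ae_of_all _ hnb)
    simpa using h
  refine ⟨?_, hbar1, ?_⟩
  · intro g
    obtain ⟨u, hu⟩ := hIu g
    exact ⟨ContinuousLinearEquiv.unitsEquiv ℝ E u, hu.symm⟩
  · have hcbar : cSup bar ≤ 2 * (c * (9/8 * b)) * (c * (9/8 * b)) := by
      refine ciSup_le fun p => ?_
      simpa only [ContinuousLinearMap.mul_def] using hkey p.1 p.2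
    have hβpos : (0:ℝ) < bSup bar := lt_of_lt_of_le one_pos hbarb1
    have hβ2 : (0:ℝ) < bSup bar ^ 2 := by positivity
    have h98 : (0:ℝ) < (9/8 * b) ^ 2 := by positivity
    have hmono : ((9/8 * b) ^ 2)⁻¹ ≤ (bSup bar ^ 2)⁻¹ := by
      apply inv_anti₀ hβ2
      nlinarith [hbarb_le, hβpos]
    have hKt : 2 * (c * (9/8 * b)) * (c * (9/8 * b)) * (9/8 * b) ^ 2 ≤ 1/9 := by
      nlinarith [mul_le_mul hcb2 hcb2 (by positivity : (0:ℝ) ≤ c * b ^ 2) (by norm_num : (0:ℝ) ≤ 1/9), hc0, hbpos]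
    refine le_trans hcbar ?_
    calc 2 * (c * (9/8 * b)) * (c * (9/8 * b))
        = (2 * (c * (9/8 * b)) * (c * (9/8 * b)) * (9/8 * b) ^ 2) * ((9/8 * b) ^ 2)⁻¹ := by
          rw [mul_assoc _ _ (((9/8 * b) ^ 2)⁻¹), mul_inv_cancel₀ h98.ne', mul_one]
      _ ≤ (1/9) * ((9/8 * b) ^ 2)⁻¹ := mul_le_mul_of_nonneg_right hKt (by positivity)
      _ ≤ (1/9) * (bSup bar ^ 2)⁻¹ := mul_le_mul_of_nonneg_left hmono (by norm_num)
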